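/- Under the spectral hypotheses, for every k ∈ ℕ and every s-dimensional subspace V ⊆ ℝ^d: (i) the subspaces 𝒫_{k,1}(Q_{k,1}^s V), …, 𝒫_{k,ℓ}(Q_{k,ℓ}^s V) form a direct sum, so 𝒯_k(V) = ⊕_{i=1}^ℓ 𝒫_{k,i}(Q_{k,i}^s V); (ii) 𝒯_k(V) equals the image of V under the single linear map Σ_{i=1}^ℓ 𝒫_{k,i} Q_{k,i}^s (with Q_{k,i}^s extended by the orthogonal projection of ℝ^d onto V composed appropriately, i.e. 𝒯_k(V) = (Σ_{i=1}^ℓ 𝒫_{k,i} Q_{k,i}^s)V); and (iii) dim 𝒯_k(V) = s. -/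

import Mathlib

open Filter

noncomputable section

abbrev Euc (d : ℕ) := EuclideanSpace ℝ (Fin d)

/-- Angle between the lines spanned by two vectors. -/
noncomputable def vecAngle {d : ℕ} (v w : Euc d) : ℝ :=
  Real.arccos (|(inner ℝ v w : ℝ)| / (‖v‖ * ‖w‖))

/-- Largest principal angle between two subspaces of equal dimension. -/
noncomputable def subAngle {d : ℕ} (V W : Submodule ℝ (Euc d)) : ℝ :=
  Real.arccos (sInf {c : ℝ | ∃ v ∈ V, ‖v‖ = 1 ∧
    c = sSup {r : ℝ | ∃ w ∈ W, ‖w‖ = 1 ∧ r = (inner ℝ v w : ℝ)}})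

/-- Orthogonal projection onto a subspace, as an endomorphism of the ambient space. -/
noncomputable def projCLM {d : ℕ} (V : Submodule ℝ (Euc d)) : Euc d →L[ℝ] Euc d :=
  V.subtypeL ∘L V.orthogonalProjection

/-- Forward product `A (m+n-1) ⋯ A m`. -/
noncomputable def PhiF {d : ℕ} (A : ℕ → (Euc d →L[ℝ] Euc d)) (m : ℕ) : ℕ → (Euc d →L[ℝ] Euc d)
  | 0 => 1
  | n + 1 => A (m + n) ∘L PhiF A m n

/-- Solution operator `Φ(n,m) = A_{n-1} ⋯ A_m` for `n ≥ m`,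
`Φ(n,m) = A_n⁻¹ ⋯ A_{m-1}⁻¹` for `n < m`. -/
noncomputable def Phi {d : ℕ} (A : ℕ → (Euc d →L[ℝ] Euc d)) (n m : ℕ) : Euc d →L[ℝ] Euc d :=
  if m ≤ n then PhiF A m (n - m) else Ring.inverse (PhiF A n (m - n))

/-- `a_{m,n}(V) = Σ_{j=m}^n ∠(Φ(j-1,0)V, Φ(j,0)V)`. -/
noncomputable def angSum {d : ℕ} (A : ℕ → (Euc d →L[ℝ] Euc d)) (V : Submodule ℝ (Euc d))
    (m n : ℕ) : ℝ :=
  ∑ j ∈ Finset.Icc m n, subAngle (V.map (Phi A (j - 1) 0 : Euc d →ₗ[ℝ] Euc d)) (V.map (Phi A j 0 : Euc d →ₗ[ℝ] Euc d))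

/-- Fiber projector `𝒫_{k,i} = P_{k,i}^s − P_{k,i+1}^s`. -/
noncomputable def fiberP {d : ℕ} (P : ℕ → ℕ → (Euc d →L[ℝ] Euc d)) (k i : ℕ) :
    Euc d →L[ℝ] Euc d :=
  P k i - P k (i + 1)

/-- The spectral fiber `𝒲_k^i = range 𝒫_{k,i}`. -/
noncomputable def fiberW {d : ℕ} (P : ℕ → ℕ → (Euc d →L[ℝ] Euc d)) (k i : ℕ) :
    Submodule ℝ (Euc d) :=
  LinearMap.range (fiberP P k i : Euc d →ₗ[ℝ] Euc d)

/-- The trace space `𝒯_k(V) = Σ_{i=1}^ℓ 𝒫_{k,i}(Q_{k,i}^s V)`, where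
`Q_{k,i}^s V = range(P_{k,i}^s) ∩ V`. -/
noncomputable def traceSpace {d : ℕ} (P : ℕ → ℕ → (Euc d →L[ℝ] Euc d)) (ℓ k : ℕ)
    (V : Submodule ℝ (Euc d)) : Submodule ℝ (Euc d) :=
  ⨆ i ∈ Finset.Icc 1 ℓ, (LinearMap.range (P k i : Euc d →ₗ[ℝ] Euc d) ⊓ V).map (fiberP P k i : Euc d →ₗ[ℝ] Euc d)

/-- `V` is a trace space at time `k`: a (direct) sum of subspaces of the fibers. -/
def IsTraceAt {d : ℕ} (P : ℕ → ℕ → (Euc d →L[ℝ] Euc d)) (ℓ k : ℕ)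
    (V : Submodule ℝ (Euc d)) : Prop :=
  ∃ W : ℕ → Submodule ℝ (Euc d),
    (∀ i, 1 ≤ i → i ≤ ℓ → W i ≤ fiberW P k i) ∧ V = ⨆ i ∈ Finset.Icc 1 ℓ, W i

/-- Under the spectral hypotheses, for every `k` and every `s`-dimensional
subspace `V`: (i) the subspaces `𝒫_{k,i}(Q_{k,i}^s V)`, `i = 1,…,ℓ`, form a direct sum;
(ii) `𝒯_k(V)` is the image of `V` under the single linear map `Σ_i 𝒫_{k,i} Q_{k,i}^s`
(with `Q_{k,i}^s` the orthogonal projection onto `range(P_{k,i}^s) ∩ V`); and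
(iii) `dim 𝒯_k(V) = s`. -/
theorem traceSpace_directSum_rep_dim
    {d : ℕ} (A : ℕ → (Euc d →L[ℝ] Euc d)) (hA : ∀ n, IsUnit (A n))
    (hbd : ∃ Cb : ℝ, ∀ n, ‖A n‖ + ‖Ring.inverse (A n)‖ ≤ Cb)
    (ℓ : ℕ) (hℓ : 1 ≤ ℓ) (K : ℝ) (hK : 1 ≤ K)
    (σm σp : ℕ → ℝ)
    (hσ0 : ∀ i, 1 ≤ i → i ≤ ℓ → 0 < σm i)
    (hσ1 : ∀ i, 1 ≤ i → i ≤ ℓ → σm i ≤ σp i)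
    (hσ2 : ∀ i, 1 ≤ i → i < ℓ → σp (i + 1) < σm i)
    (P : ℕ → ℕ → (Euc d →L[ℝ] Euc d))
    (hproj : ∀ n i, 1 ≤ i → i ≤ ℓ + 1 → P n i ∘L P n i = P n i)
    (hP1 : ∀ n, P n 1 = 1)
    (hPl : ∀ n, P n (ℓ + 1) = 0)
    (hcomm : ∀ n m i, 1 ≤ i → i ≤ ℓ + 1 → P n i ∘L Phi A n m = Phi A n m ∘L P m i)
    (hrange : ∀ n i, 1 ≤ i → i ≤ ℓ → LinearMap.range (P n (i + 1) : Euc d →ₗ[ℝ] Euc d) ≤ LinearMap.range (P n i : Euc d →ₗ[ℝ] Euc d))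
    (hker : ∀ n i, 1 ≤ i → i ≤ ℓ → LinearMap.ker (P n i : Euc d →ₗ[ℝ] Euc d) ≤ LinearMap.ker (P n (i + 1) : Euc d →ₗ[ℝ] Euc d))
    (hbndS : ∀ i, 1 ≤ i → i ≤ ℓ → ∀ n m : ℕ, m ≤ n →
      ‖Phi A n m ∘L P m (i + 1)‖ ≤ K * (if i = ℓ then (0 : ℝ) else σp (i + 1)) ^ (n - m))
    (hbndU : ∀ i, 1 ≤ i → i ≤ ℓ → ∀ n m : ℕ, m ≤ n →
      ‖Phi A m n ∘L (1 - P n (i + 1))‖ ≤ K * (σm i ^ (n - m))⁻¹)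
    (k s : ℕ) (V : Submodule ℝ (Euc d)) (hV : Module.finrank ℝ V = s) :
    (∀ i, 1 ≤ i → i ≤ ℓ →
      Disjoint ((LinearMap.range (P k i : Euc d →ₗ[ℝ] Euc d) ⊓ V).map (fiberP P k i : Euc d →ₗ[ℝ] Euc d))
        (⨆ j ∈ (Finset.Icc 1 ℓ).erase i,
          (LinearMap.range (P k j : Euc d →ₗ[ℝ] Euc d) ⊓ V).map (fiberP P k j : Euc d →ₗ[ℝ] Euc d))) ∧
    traceSpace P ℓ k V =
      V.map ((∑ i ∈ Finset.Icc 1 ℓ, fiberP P k i ∘L projCLM (LinearMap.range (P k i : Euc d →ₗ[ℝ] Euc d) ⊓ V) : Euc d →L[ℝ] Euc d) : Euc d →ₗ[ℝ] Euc d) ∧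
    Module.finrank ℝ (traceSpace P ℓ k V) = s := by
  
  classical
  -- basic algebra of the projectors
  have fib_apply : ∀ i x, fiberP P k i x = P k i x - P k (i + 1) x := by
    intro i x; simp [fiberP]
  have hidem : ∀ i, 1 ≤ i → i ≤ ℓ + 1 → ∀ x, P k i (P k i x) = P k i x := by
    intro i h1 h2 x
    have h := hproj k i h1 h2
    calc P k i (P k i x) = (P k i ∘L P k i) x := rfl
      _ = P k i x := by rw [h]
  have hPfix : ∀ i, 1 ≤ i → i ≤ ℓ + 1 → ∀ x ∈ LinearMap.range (P k i : Euc d →ₗ[ℝ] Euc d), P k i x = x := by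
    intro i h1 h2 x hx
    obtain ⟨y, rfl⟩ := hx
    exact hidem i h1 h2 y
  have hrchain : ∀ i j, 1 ≤ i → i ≤ j → j ≤ ℓ + 1 →
      LinearMap.range (P k j : Euc d →ₗ[ℝ] Euc d) ≤ LinearMap.range (P k i : Euc d →ₗ[ℝ] Euc d) := by
    intro i j h1 hij
    induction j, hij using Nat.le_induction with
    | base => intro _; exact le_rfl
    | succ j hij ih =>
      intro hj
      exact (hrange k j (h1.trans hij) (by omega)).trans (ih (by omega))
  have hkchain : ∀ i j, 1 ≤ i → i ≤ j → j ≤ ℓ + 1 →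
      LinearMap.ker (P k i : Euc d →ₗ[ℝ] Euc d) ≤ LinearMap.ker (P k j : Euc d →ₗ[ℝ] Euc d) := by
    intro i j h1 hij
    induction j, hij using Nat.le_induction with
    | base => intro _; exact le_rfl
    | succ j hij ih =>
      intro hj
      exact (ih (by omega)).trans (hker k j (h1.trans hij) (by omega))
  have hPiPj : ∀ i j, 1 ≤ i → i ≤ j → j ≤ ℓ + 1 → ∀ x, P k i (P k j x) = P k j x := by
    intro i j h1 hij hj x
    exact hPfix i h1 (hij.trans hj) _ (hrchain i j h1 hij hj ⟨x, rfl⟩)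
  have hPjPi : ∀ i j, 1 ≤ i → i ≤ j → j ≤ ℓ + 1 → ∀ x, P k j (P k i x) = P k j x := by
    intro i j h1 hij hj x
    have hx : x - P k i x ∈ LinearMap.ker (P k i : Euc d →ₗ[ℝ] Euc d) := by
      simp [LinearMap.mem_ker, map_sub, hidem i h1 (hij.trans hj) x]
    have hx2 := hkchain i j h1 hij hj hx
    rw [LinearMap.mem_ker, map_sub, sub_eq_zero] at hx2
    exact hx2.symm
  have hmax : ∀ a b, 1 ≤ a → a ≤ ℓ + 1 → 1 ≤ b → b ≤ ℓ + 1 → ∀ x,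
      P k a (P k b x) = P k (max a b) x := by
    intro a b h1a h2a h1b h2b x
    rcases le_total a b with h | h
    · rw [max_eq_right h]; exact hPiPj a b h1a h h2b x
    · rw [max_eq_left h]; exact hPjPi b a h1b h h2a x
  have hfib0 : ∀ i j, 1 ≤ i → i ≤ ℓ → 1 ≤ j → j ≤ ℓ → i ≠ j → ∀ x,
      fiberP P k i (fiberP P k j x) = 0 := by
    intro i j h1i h2i h1j h2j hne x
    rw [fib_apply, fib_apply, map_sub, map_sub]
    rw [hmax i j h1i (by omega) h1j (by omega), hmax i (j+1) h1i (by omega) (by omega) (by omega),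
      hmax (i+1) j (by omega) (by omega) h1j (by omega),
      hmax (i+1) (j+1) (by omega) (by omega) (by omega) (by omega)]
    rcases lt_or_gt_of_ne hne with h | h
    · rw [max_eq_right (by omega : i ≤ j), max_eq_right (by omega : i ≤ j+1),
        max_eq_right (by omega : i+1 ≤ j), max_eq_right (by omega : i+1 ≤ j+1)]
      abel
    · rw [max_eq_left (by omega : j ≤ i), max_eq_left (by omega : j+1 ≤ i),
        max_eq_left (by omega : j ≤ i+1), max_eq_left (by omega : j+1 ≤ i+1)]
      abel
  have hfibidem : ∀ i, 1 ≤ i → i ≤ ℓ → ∀ x,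
      fiberP P k i (fiberP P k i x) = fiberP P k i x := by
    intro i h1 h2 x
    rw [fib_apply, fib_apply, map_sub, map_sub]
    rw [hmax i i h1 (by omega) h1 (by omega), hmax i (i+1) h1 (by omega) (by omega) (by omega),
      hmax (i+1) i (by omega) (by omega) h1 (by omega),
      hmax (i+1) (i+1) (by omega) (by omega) (by omega) (by omega)]
    simp only [max_self, max_eq_right (Nat.le_succ i), max_eq_left (Nat.le_succ i)]
    abel
  set Vi : ℕ → Submodule ℝ (Euc d) := fun i => LinearMap.range (P k i : Euc d →ₗ[ℝ] Euc d) ⊓ V with hVi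
  set W : ℕ → Submodule ℝ (Euc d) := fun i => (Vi i).map (fiberP P k i : Euc d →ₗ[ℝ] Euc d) with hW
  have projCLM_mem : ∀ (U : Submodule ℝ (Euc d)) (x : Euc d), projCLM U x ∈ U := by
    intro U x; exact (U.orthogonalProjection x).2
  have projCLM_fix : ∀ (U : Submodule ℝ (Euc d)) (x : Euc d), x ∈ U → projCLM U x = x := by
    intro U x hx
    exact (U.starProjection_eq_self_iff).mpr hx
  -- part (i)
  have part1 : ∀ i, 1 ≤ i → i ≤ ℓ →
      Disjoint (W i) (⨆ j ∈ (Finset.Icc 1 ℓ).erase i, W j) := by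
    intro i h1 h2
    rw [Submodule.disjoint_def]
    intro x hxW hxS
    have hker' : (⨆ j ∈ (Finset.Icc 1 ℓ).erase i, W j) ≤ LinearMap.ker (fiberP P k i : Euc d →ₗ[ℝ] Euc d) := by
      refine iSup₂_le fun j hj => ?_
      obtain ⟨hne, hjI⟩ := Finset.mem_erase.mp hj
      rw [Finset.mem_Icc] at hjI
      rintro z ⟨w, hw, rfl⟩
      rw [LinearMap.mem_ker]
      exact hfib0 i j h1 h2 hjI.1 hjI.2 (Ne.symm hne) w
    have hx0 : fiberP P k i x = 0 := LinearMap.mem_ker.mp (hker' hxS)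
    obtain ⟨y, hy, rfl⟩ := hxW
    change (fiberP P k i) y = 0
    rw [← hfibidem i h1 h2 y]
    exact hx0
  -- the single linear map
  set T : Euc d →L[ℝ] Euc d := ∑ i ∈ Finset.Icc 1 ℓ, fiberP P k i ∘L projCLM (Vi i) with hT
  have hTapply : ∀ x, T x = ∑ i ∈ Finset.Icc 1 ℓ, fiberP P k i (projCLM (Vi i) x) := by
    intro x
    rw [hT]
    simp [ContinuousLinearMap.sum_apply]
  -- telescoping sum
  have tel : ∀ i x, ∑ j ∈ Finset.Icc 1 i, fiberP P k j x = P k 1 x - P k (i + 1) x := by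
    intro i x
    induction i with
    | zero => simp
    | succ n ihn =>
      rw [Finset.sum_Icc_succ_top (by omega), ihn, fib_apply]
      abel
  -- key: each fiber piece is in the image of T
  have key : ∀ t i, 1 ≤ i → i ≤ ℓ → ℓ - i ≤ t → ∀ w ∈ Vi i,
      fiberP P k i w ∈ V.map (T : Euc d →ₗ[ℝ] Euc d) := by
    intro t
    induction t with
    | zero =>
      intro i h1 h2 h3 w hw
      have hiℓ : i = ℓ := by omega
      have hwl : ∀ j, 1 ≤ j → j ≤ ℓ → projCLM (Vi j) w = w := by
        intro j hj1 hj2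
        refine projCLM_fix _ _ ?_
        exact ⟨hrchain j i hj1 (by omega) (by omega) hw.1, hw.2⟩
      have hcg : ∑ j ∈ Finset.Icc 1 ℓ, fiberP P k j (projCLM (Vi j) w)
          = ∑ j ∈ Finset.Icc 1 ℓ, fiberP P k j w :=
        Finset.sum_congr rfl (fun j hj => by
          rw [Finset.mem_Icc] at hj
          rw [hwl j hj.1 hj.2])
      have hTw : T w = fiberP P k i w := by
        rw [hTapply, hcg, tel, hP1, hPl, fib_apply, hiℓ, hPl,
          hPfix ℓ hℓ (by omega) w (hiℓ ▸ hw.1)]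
        simp
      exact ⟨w, hw.2, hTw⟩
    | succ t ih =>
      intro i h1 h2 h3 w hw
      by_cases hcase : ℓ - i ≤ t
      · exact ih i h1 h2 hcase w hw
      -- i < ℓ, general step
      have hwl : ∀ j, 1 ≤ j → j ≤ i → projCLM (Vi j) w = w := by
        intro j hj1 hj2
        refine projCLM_fix _ _ ?_
        exact ⟨hrchain j i hj1 hj2 (by omega) hw.1, hw.2⟩
      have hsplit : ∀ f : ℕ → Euc d,
          (∑ j ∈ Finset.Icc 1 i, f j) + ∑ j ∈ Finset.Icc (i+1) ℓ, f j
            = ∑ j ∈ Finset.Icc 1 ℓ, f j := by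
        intro f
        rw [show Finset.Icc 1 i = Finset.Ioc 0 i from Finset.Icc_add_one_left_eq_Ioc 0 i, Finset.Icc_add_one_left_eq_Ioc i ℓ, show Finset.Icc 1 ℓ = Finset.Ioc 0 ℓ from Finset.Icc_add_one_left_eq_Ioc 0 ℓ]
        exact Finset.sum_Ioc_consecutive f (Nat.zero_le i) h2
      have hcg : ∑ j ∈ Finset.Icc 1 i, fiberP P k j (projCLM (Vi j) w)
          = ∑ j ∈ Finset.Icc 1 i, fiberP P k j w :=
        Finset.sum_congr rfl (fun j hj => by
          rw [Finset.mem_Icc] at hj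
          rw [hwl j hj.1 hj.2])
      have hTw : T w = fiberP P k i w
          + ∑ j ∈ Finset.Icc (i+1) ℓ, fiberP P k j (projCLM (Vi j) w) := by
        rw [hTapply, ← hsplit (fun j => fiberP P k j (projCLM (Vi j) w))]
        congr 1
        rw [hcg, tel, hP1, fib_apply, hPfix i h1 (by omega) w hw.1]
        simp
      have hmem1 : T w ∈ V.map (T : Euc d →ₗ[ℝ] Euc d) := ⟨w, hw.2, rfl⟩
      have hmem2 : ∑ j ∈ Finset.Icc (i+1) ℓ, fiberP P k j (projCLM (Vi j) w) ∈ V.map (T : Euc d →ₗ[ℝ] Euc d) := by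
        refine Submodule.sum_mem _ fun j hj => ?_
        rw [Finset.mem_Icc] at hj
        refine ih j (by omega) hj.2 (by omega) _ ?_
        exact projCLM_mem (Vi j) w
      have : fiberP P k i w = T w
          - ∑ j ∈ Finset.Icc (i+1) ℓ, fiberP P k j (projCLM (Vi j) w) := by
        rw [hTw]; abel
      rw [this]
      exact Submodule.sub_mem _ hmem1 hmem2
  -- part (ii)
  have part2 : traceSpace P ℓ k V = V.map (T : Euc d →ₗ[ℝ] Euc d) := by
    apply le_antisymm
    · refine iSup₂_le fun i hi => ?_
      rw [Finset.mem_Icc] at hi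
      rintro x ⟨w, hw, rfl⟩
      exact key (ℓ - i) i hi.1 hi.2 le_rfl w hw
    · rintro x ⟨v, hv, rfl⟩
      change T v ∈ _
      rw [hTapply]
      refine Submodule.sum_mem _ fun i hi => ?_
      refine Submodule.mem_iSup_of_mem i (Submodule.mem_iSup_of_mem hi ?_)
      exact Submodule.mem_map_of_mem
        ⟨(projCLM_mem (Vi i) v).1, (projCLM_mem (Vi i) v).2⟩
  -- part (iii)
  have part3 : Module.finrank ℝ (traceSpace P ℓ k V) = s := by
    set f : V →ₗ[ℝ] Euc d := (T : Euc d →ₗ[ℝ] Euc d).comp V.subtype with hf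
    have hinj : Function.Injective f := by
      rw [← LinearMap.ker_eq_bot, eq_bot_iff]
      rintro ⟨x, hxV⟩ hx0
      rw [LinearMap.mem_ker] at hx0
      have hx0' : T x = 0 := hx0
      have hfib : ∀ i, 1 ≤ i → i ≤ ℓ → fiberP P k i (projCLM (Vi i) x) = 0 := by
        intro i h1 h2
        have h0 : fiberP P k i (T x) = 0 := by rw [hx0']; simp
        rw [hTapply, map_sum] at h0
        rw [Finset.sum_eq_single i (fun j hj hne => by
            rw [Finset.mem_Icc] at hj
            exact hfib0 i j h1 h2 hj.1 hj.2 (Ne.symm hne) _)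
          (fun h => absurd (Finset.mem_Icc.mpr ⟨h1, h2⟩) h)] at h0
        rw [← hfibidem i h1 h2]
        exact h0
      have hmem : ∀ i, i ≤ ℓ → x ∈ Vi (i + 1) := by
        intro i
        induction i with
        | zero =>
          intro _
          exact ⟨by rw [hP1]; exact ⟨x, rfl⟩, hxV⟩
        | succ n ihn =>
          intro hn
          have hx1 : x ∈ Vi (n + 1) := ihn (by omega)
          have hQ : projCLM (Vi (n + 1)) x = x := projCLM_fix _ _ hx1
          have h0 : fiberP P k (n + 1) x = 0 := by
            have := hfib (n + 1) (by omega) hn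
            rwa [hQ] at this
          rw [fib_apply, sub_eq_zero] at h0
          have hpx : P k (n + 1) x = x := hPfix (n + 1) (by omega) (by omega) x hx1.1
          exact ⟨⟨x, by change P k (n + 1 + 1) x = x; rw [← h0, hpx]⟩, hxV⟩
      have hxl : x ∈ Vi (ℓ + 1) := hmem ℓ le_rfl
      have : x ∈ LinearMap.range (P k (ℓ + 1) : Euc d →ₗ[ℝ] Euc d) := hxl.1
      rw [hPl] at this
      obtain ⟨y, hy⟩ := this
      have hx00 : x = 0 := by rw [← hy]; rfl
      simp [hx00]
    have hr : LinearMap.range f = V.map (T : Euc d →ₗ[ℝ] Euc d) := by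
      rw [hf, LinearMap.range_comp, Submodule.range_subtype]
    have hfr := LinearMap.finrank_range_of_inj hinj
    rw [hr] at hfr
    rw [part2, hfr, hV]
  exact ⟨part1, part2, part3⟩
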